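/- Let d ≥ 1 be an integer, γ ∈ (1/2,(d+2)/4), and T ∈ (0,∞]. Suppose ψ : (ℝ^d \ {0}) × [0,∞) → [0,∞] is measurable, satisfies the normalized Fourier Montgomery–Smith equation ψ(ξ,t) = e^{−t|ξ|^{2γ}} ψ(ξ,0) + ∫_0^t e^{−s|ξ|^{2γ}} |ξ|^{2γ} ∫_{ℝ^d} ψ(η,t−s) ψ(ξ−η,t−s) H(η|ξ) dη ds for all ξ ≠ 0 and t ≥ 0, and ψ(ξ,t) < ∞ for Lebesgue-almost every (ξ,t) ∈ ℝ^d × (0,T). Then there exists a measurable set D ⊆ ℝ^d whose complement is Lebesgue-null such that ψ(ξ,t) < ∞ for every ξ ∈ D and every t ∈ [0,T). -/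

import Mathlib

open MeasureTheory Set ENNReal

/-- The constant `c_{d,γ}` of the standard majorizing kernel. -/
noncomputable def cdg (d : ℕ) (γ : ℝ) : ℝ :=
  Real.pi ^ (-(d : ℝ)/2) * Real.Gamma (2*γ - 1) * (Real.Gamma (((d : ℝ) + 1 - 2*γ)/2))^2 /
    (Real.Gamma (((d : ℝ) + 2 - 4*γ)/2) * (Real.Gamma ((2*γ - 1)/2))^2)

/-- `H(η|ξ) = c_{d,γ} |η|^{2γ−d−1} |ξ−η|^{2γ−d−1} |ξ|^{d+2−4γ}`. -/
noncomputable def Hker (d : ℕ) (γ : ℝ) (η ξ : EuclideanSpace ℝ (Fin d)) : ℝ :=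
  cdg d γ * ‖η‖ ^ (2*γ - (d : ℝ) - 1) * ‖ξ - η‖ ^ (2*γ - (d : ℝ) - 1)
    * ‖ξ‖ ^ ((d : ℝ) + 2 - 4*γ)

/-- Reflecting the time variable in a lower Lebesgue integral over `Ioc 0 t`. -/
lemma refl_lintegral (t : ℝ) (f : ℝ → ℝ≥0∞) :
    ∫⁻ s in Set.Ioc (0:ℝ) t, f (t - s) = ∫⁻ u in Set.Ioc (0:ℝ) t, f u := by
  have mp : MeasurePreserving (fun x : ℝ => t - x) volume volume :=
    Measure.measurePreserving_sub_left volume t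
  have emb : MeasurableEmbedding (fun x : ℝ => t - x) :=
    (Homeomorph.subLeft t).measurableEmbedding
  rw [mp.setLIntegral_comp_emb emb f (Set.Ioc 0 t), Set.image_const_sub_Ioc]
  simp only [sub_self, sub_zero]
  exact setLIntegral_congr Ico_ae_eq_Ioc

theorem stmt12 (d : ℕ) (hd : 1 ≤ d) (γ : ℝ)
    (hγ : γ ∈ Set.Ioo (1/2 : ℝ) (((d : ℝ) + 2)/4))
    (T : ℝ≥0∞) (hT : 0 < T)
    (ψ : EuclideanSpace ℝ (Fin d) → ℝ → ℝ≥0∞)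
    (hmeas : Measurable (Function.uncurry ψ))
    (heq : ∀ ξ : EuclideanSpace ℝ (Fin d), ξ ≠ 0 → ∀ t : ℝ, 0 ≤ t →
      ψ ξ t = ENNReal.ofReal (Real.exp (-t * ‖ξ‖ ^ (2*γ))) * ψ ξ 0 +
        ∫⁻ s in Set.Ioc (0:ℝ) t,
          ENNReal.ofReal (Real.exp (-s * ‖ξ‖ ^ (2*γ)) * ‖ξ‖ ^ (2*γ)) *
            ∫⁻ η, ψ η (t - s) * ψ (ξ - η) (t - s) * ENNReal.ofReal (Hker d γ η ξ))
    (hfin : ∀ᵐ p : EuclideanSpace ℝ (Fin d) × ℝ ∂(volume : Measure (EuclideanSpace ℝ (Fin d) × ℝ)),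
      0 < p.2 → ENNReal.ofReal p.2 < T → ψ p.1 p.2 < ⊤) :
    ∃ D : Set (EuclideanSpace ℝ (Fin d)), MeasurableSet D ∧ volume Dᶜ = 0 ∧
      ∀ ξ ∈ D, ∀ t : ℝ, 0 ≤ t → ENNReal.ofReal t < T → ψ ξ t < ⊤ := by
  classical
  -- Key identity: `e^{t λ} ψ(ξ,t) = ψ(ξ,0) + ∫_0^t e^{u λ} λ F(ξ,u) du`.
  have key : ∀ (ξ : EuclideanSpace ℝ (Fin d)), ξ ≠ 0 → ∀ t : ℝ, 0 ≤ t →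
      ENNReal.ofReal (Real.exp (t * ‖ξ‖ ^ (2*γ))) * ψ ξ t =
      ψ ξ 0 + ∫⁻ u in Set.Ioc (0:ℝ) t,
        ENNReal.ofReal (Real.exp (u * ‖ξ‖ ^ (2*γ)) * ‖ξ‖ ^ (2*γ)) *
          ∫⁻ η, ψ η u * ψ (ξ - η) u * ENNReal.ofReal (Hker d γ η ξ) := by
    intro ξ hξ t ht
    set lam := ‖ξ‖ ^ (2*γ) with hlam
    rw [heq ξ hξ t ht, mul_add]
    congr 1
    · rw [← mul_assoc, ← ENNReal.ofReal_mul (Real.exp_pos _).le, ← Real.exp_add]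
      norm_num
      simp [hlam]
    · rw [← lintegral_const_mul' _ _ ENNReal.ofReal_ne_top]
      rw [show (∫⁻ u in Set.Ioc (0:ℝ) t,
          ENNReal.ofReal (Real.exp (u * lam) * lam) *
            ∫⁻ η, ψ η u * ψ (ξ - η) u * ENNReal.ofReal (Hker d γ η ξ)) =
          ∫⁻ s in Set.Ioc (0:ℝ) t,
          ENNReal.ofReal (Real.exp ((t - s) * lam) * lam) *
            ∫⁻ η, ψ η (t - s) * ψ (ξ - η) (t - s) * ENNReal.ofReal (Hker d γ η ξ) from
        (refl_lintegral t (fun u => ENNReal.ofReal (Real.exp (u * lam) * lam) *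
            ∫⁻ η, ψ η u * ψ (ξ - η) u * ENNReal.ofReal (Hker d γ η ξ))).symm]
      refine lintegral_congr fun s => ?_
      have hre : Real.exp (t * lam) * (Real.exp (-s * lam) * lam)
          = Real.exp ((t - s) * lam) * lam := by
        rw [show (t - s) * lam = t * lam + -s * lam by ring, Real.exp_add, mul_assoc]
      rw [← mul_assoc, ← ENNReal.ofReal_mul (Real.exp_pos _).le, hre]
  -- Monotonicity of finiteness backwards in time.
  have mono : ∀ (ξ : EuclideanSpace ℝ (Fin d)), ξ ≠ 0 → ∀ t₁ t₂ : ℝ, 0 ≤ t₁ → t₁ ≤ t₂ →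
      ψ ξ t₂ ≠ ⊤ → ψ ξ t₁ ≠ ⊤ := by
    intro ξ hξ t₁ t₂ h0 h12 h2
    have k1 := key ξ hξ t₁ h0
    have k2 := key ξ hξ t₂ (h0.trans h12)
    have hle : ENNReal.ofReal (Real.exp (t₁ * ‖ξ‖ ^ (2*γ))) * ψ ξ t₁ ≤
        ENNReal.ofReal (Real.exp (t₂ * ‖ξ‖ ^ (2*γ))) * ψ ξ t₂ := by
      rw [k1, k2]
      exact add_le_add_right (lintegral_mono_set (Set.Ioc_subset_Ioc_right h12)) _
    have hlt : ENNReal.ofReal (Real.exp (t₂ * ‖ξ‖ ^ (2*γ))) * ψ ξ t₂ < ⊤ :=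
      ENNReal.mul_lt_top ENNReal.ofReal_lt_top (lt_top_iff_ne_top.mpr h2)
    intro h1top
    rw [h1top, ENNReal.mul_top (by
      exact ne_of_gt (ENNReal.ofReal_pos.mpr (Real.exp_pos _)))] at hle
    exact hlt.ne (top_le_iff.mp hle)
  -- The bad space-time set is measurable and null.
  set S : Set (EuclideanSpace ℝ (Fin d) × ℝ) := {p : EuclideanSpace ℝ (Fin d) × ℝ | 0 < p.2 ∧ ENNReal.ofReal p.2 < T ∧ ψ p.1 p.2 = ⊤}
    with hSdef
  have hS : MeasurableSet S := by
    refine MeasurableSet.inter (measurable_snd measurableSet_Ioi) (MeasurableSet.inter ?_ ?_)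
    · exact (ENNReal.measurable_ofReal.comp measurable_snd) measurableSet_Iio
    · exact show MeasurableSet (Function.uncurry ψ ⁻¹' {⊤}) from
        hmeas (measurableSet_singleton ⊤)
  have hSnull : volume S = 0 := by
    refine measure_mono_null ?_ (ae_iff.mp hfin)
    intro p hp hcon
    exact (hcon hp.1 hp.2.1).ne hp.2.2
  -- Swap coordinates and slice by time.
  set S' : Set (ℝ × EuclideanSpace ℝ (Fin d)) := Prod.swap ⁻¹' S with hS'def
  have hS' : MeasurableSet S' := hS.preimage measurable_swap
  have hS'null : volume S' = 0 := by
    rw [Measure.volume_eq_prod, ← Measure.prod_swap,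
      Measure.map_apply measurable_swap hS']
    have : Prod.swap ⁻¹' S' = S := by
      ext p; simp [hS'def]
    rw [this, ← Measure.volume_eq_prod]
    exact hSnull
  have hslice : ∀ᵐ t : ℝ, volume (Prod.mk t ⁻¹' S') = 0 := by
    have := (Measure.measure_prod_null hS').mp (by
      rw [← Measure.volume_eq_prod]; exact hS'null)
    filter_upwards [this] with t ht using by simpa using ht
  -- Above every admissible time there is a good time with a.e. finite slice.
  have hgood : ∀ a : ℝ, 0 ≤ a → ENNReal.ofReal a < T →
      ∃ u : ℝ, a < u ∧ volume {ξ : EuclideanSpace ℝ (Fin d) | ψ ξ u = ⊤} = 0 := by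
    intro a ha haT
    obtain ⟨r, hr0, har, hrT⟩ := ENNReal.lt_iff_exists_real_btwn.mp haT
    have har' : a < r := by
      by_contra hcon
      exact absurd (ENNReal.ofReal_le_ofReal (not_lt.mp hcon)) (not_le.mpr har)
    have hBad : volume {t : ℝ | ¬ volume (Prod.mk t ⁻¹' S') = 0} = 0 := ae_iff.mp hslice
    have hne : ¬ (Set.Ioo a r ⊆ {t : ℝ | ¬ volume (Prod.mk t ⁻¹' S') = 0}) := by
      intro hsub
      have := measure_mono_null hsub hBad
      rw [Real.volume_Ioo] at this
      exact absurd this (ne_of_gt (ENNReal.ofReal_pos.mpr (sub_pos.mpr har')))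
    obtain ⟨u, hu, hunb⟩ := Set.not_subset.mp hne
    refine ⟨u, hu.1, measure_mono_null ?_ (not_not.mp hunb)⟩
    intro ξ hξ
    exact ⟨ha.trans_lt hu.1,
      (ENNReal.ofReal_le_ofReal hu.2.le).trans_lt hrT, hξ⟩
  -- Choose a good time above each rational.
  have hchoice : ∀ q : ℚ, ∃ u : ℝ,
      (0 ≤ (q:ℝ) ∧ ENNReal.ofReal (q:ℝ) < T) →
        ((q:ℝ) < u ∧ volume {ξ : EuclideanSpace ℝ (Fin d) | ψ ξ u = ⊤} = 0) := by
    intro q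
    by_cases h : 0 ≤ (q:ℝ) ∧ ENNReal.ofReal (q:ℝ) < T
    · obtain ⟨u, hu⟩ := hgood q h.1 h.2
      exact ⟨u, fun _ => hu⟩
    · exact ⟨0, fun hc => absurd hc h⟩
  choose u hu using hchoice
  -- The countable family of null sets.
  set N : ℚ → Set (EuclideanSpace ℝ (Fin d)) := fun q =>
    {ξ : EuclideanSpace ℝ (Fin d) | (0 ≤ (q:ℝ) ∧ ENNReal.ofReal (q:ℝ) < T) ∧ ψ ξ (u q) = ⊤} with hNdef
  have hNmeas : ∀ q, MeasurableSet (N q) := by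
    intro q
    by_cases h : 0 ≤ (q:ℝ) ∧ ENNReal.ofReal (q:ℝ) < T
    · have : N q = {ξ : EuclideanSpace ℝ (Fin d) | ψ ξ (u q) = ⊤} := by
        ext ξ
        simp only [hNdef, Set.mem_setOf_eq]
        exact ⟨fun hx => hx.2, fun hx => ⟨h, hx⟩⟩
      rw [this]
      exact (hmeas.comp (measurable_id.prodMk measurable_const))
        (measurableSet_singleton ⊤)
    · have : N q = ∅ := by
        ext ξ
        simp only [hNdef, Set.mem_setOf_eq, Set.mem_empty_iff_false, iff_false]
        exact fun hx => h hx.1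
      simp [this]
  have hNnull : ∀ q, volume (N q) = 0 := by
    intro q
    by_cases h : 0 ≤ (q:ℝ) ∧ ENNReal.ofReal (q:ℝ) < T
    · refine measure_mono_null ?_ (hu q h).2
      intro ξ hξ; exact hξ.2
    · have : N q = ∅ := by
        ext ξ
        simp only [hNdef, Set.mem_setOf_eq, Set.mem_empty_iff_false, iff_false]
        exact fun hx => h hx.1
      simp [this]
  -- The singleton 0 is null.
  haveI : Nonempty (Fin d) := ⟨⟨0, hd⟩⟩
  haveI : Nontrivial (EuclideanSpace ℝ (Fin d)) := by
    refine ⟨0, EuclideanSpace.single ⟨0, hd⟩ 1, ?_⟩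
    intro hcon
    have := congrArg (fun f : EuclideanSpace ℝ (Fin d) => f ⟨0, hd⟩) hcon
    simp [EuclideanSpace.single_apply] at this
  have h0null : volume ({(0:EuclideanSpace ℝ (Fin d))} : Set (EuclideanSpace ℝ (Fin d))) = 0 := measure_singleton 0
  -- Define D.
  refine ⟨({(0:EuclideanSpace ℝ (Fin d))} : Set (EuclideanSpace ℝ (Fin d)))ᶜ ∩ ⋂ q : ℚ, (N q)ᶜ, ?_, ?_, ?_⟩
  · exact (measurableSet_singleton _).compl.inter
      (MeasurableSet.iInter fun q => (hNmeas q).compl)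
  · rw [Set.compl_inter, compl_compl, Set.compl_iInter]
    refine measure_union_null h0null (measure_iUnion_null fun q => ?_)
    rw [compl_compl]; exact hNnull q
  · rintro ξ ⟨hξ0, hξN⟩ t ht htT
    have hξne : ξ ≠ 0 := by simpa using hξ0
    obtain ⟨r, hr0, hTr, hrT⟩ := ENNReal.lt_iff_exists_real_btwn.mp htT
    have htr : t < r := by
      by_contra hcon
      exact absurd (ENNReal.ofReal_le_ofReal (not_lt.mp hcon)) (not_le.mpr hTr)
    obtain ⟨q, hq1, hq2⟩ := exists_rat_btwn htr
    have hc : 0 ≤ (q:ℝ) ∧ ENNReal.ofReal (q:ℝ) < T :=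
      ⟨ht.trans hq1.le, (ENNReal.ofReal_le_ofReal hq2.le).trans_lt hrT⟩
    have huq := hu q hc
    have hξnotN : ξ ∉ N q := by
      have := Set.mem_iInter.mp hξN q
      simpa using this
    have hψuq : ψ ξ (u q) ≠ ⊤ := by
      intro hcon
      exact hξnotN ⟨hc, hcon⟩
    have : ψ ξ t ≠ ⊤ :=
      mono ξ hξne t (u q) ht (hq1.le.trans huq.1.le) hψuq
    exact lt_top_iff_ne_top.mpr this
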